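/- (CDF, Case 4.) Suppose θ₁+θ₂ = θ₁′ = θ₂′. Then for the joint CDF F(y₁,y₂) = ∫_a^{y₁} ∫_a^{y₂} f(u,v) dv du of the DPRH model: if a < y₁ < y₂ < b then F(y₁,y₂) = F₀(y₁)^{θ₁+θ₂}·[1 + θ₂ ln(F₀(y₂)/F₀(y₁))], and if a < y₂ < y₁ < b then F(y₁,y₂) = F₀(y₂)^{θ₁+θ₂}·[1 + θ₁ ln(F₀(y₁)/F₀(y₂))]. -/

import Mathlib

open MeasureTheory Set

noncomputable def dprh (a b : ℝ) (F₀ f₀ : ℝ → ℝ) (θ₁ θ₂ θ₁' θ₂' : ℝ) (y₁ y₂ : ℝ) : ℝ :=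
  if a < y₁ ∧ y₁ < y₂ ∧ y₂ < b then
    θ₁' * θ₂ * f₀ y₁ * f₀ y₂ * F₀ y₁ ^ (θ₁' - 1) * F₀ y₂ ^ (θ₁ + θ₂ - θ₁' - 1)
  else if a < y₂ ∧ y₂ < y₁ ∧ y₁ < b then
    θ₁ * θ₂' * f₀ y₁ * f₀ y₂ * F₀ y₁ ^ (θ₁ + θ₂ - θ₂' - 1) * F₀ y₂ ^ (θ₂' - 1)
  else 0
open Filter
open scoped Interval

/-- Improper FTC on `(a, c]`: nonnegative derivative, limit `L` at `a⁺`. -/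
lemma ftc_improper {a c : ℝ} (hac : a < c) (g g' : ℝ → ℝ) (L : ℝ)
    (hg : ∀ x ∈ Ioc a c, HasDerivAt g (g' x) x)
    (hpos : ∀ x ∈ Ioo a c, 0 ≤ g' x)
    (hla : Tendsto g (nhdsWithin a (Ioi a)) (nhds L)) :
    IntervalIntegrable g' volume a c ∧ (∫ x in a..c, g' x) = g c - L := by
  set G : ℝ → ℝ := Function.update g a L with hGdef
  have hGg : ∀ x, x ≠ a → G x = g x := fun x hx => Function.update_of_ne hx _ _
  have hGderiv : ∀ x ∈ Ioo a c, HasDerivAt G (g' x) x := by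
    intro x hx
    refine (hg x ⟨hx.1, hx.2.le⟩).congr_of_eventuallyEq ?_
    filter_upwards [eventually_ne_nhds hx.1.ne'] with y hy using hGg y hy
  have hGcont : ContinuousOn G (Icc a c) := by
    intro x hx
    rcases eq_or_ne x a with h | h
    · subst h
      have h1 : Tendsto G (nhdsWithin x (Ioi x)) (nhds L) := by
        refine hla.congr' ?_
        filter_upwards [self_mem_nhdsWithin] with y hy
        exact (hGg y (ne_of_gt hy)).symm
      have h2 : ContinuousWithinAt G (Ioi x) x := by
        have : G x = L := Function.update_self _ _ _
        rw [ContinuousWithinAt, this]; exact h1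
      have h3 : ContinuousWithinAt G (insert x (Ioi x)) x := h2.insert
      refine h3.mono fun y hy => ?_
      rcases eq_or_lt_of_le hy.1 with h4 | h4
      · exact h4 ▸ mem_insert _ _
      · exact mem_insert_of_mem _ h4
    · have hx' : x ∈ Ioc a c := ⟨lt_of_le_of_ne hx.1 (Ne.symm h), hx.2⟩
      have h1 : ContinuousAt g x := (hg x hx').continuousAt
      have h2 : ContinuousAt G x := by
        refine h1.congr ?_
        filter_upwards [eventually_ne_nhds h] with y hy using (hGg y hy).symm
      exact h2.continuousWithinAt
  have hint : IntervalIntegrable g' volume a c := by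
    apply intervalIntegral.intervalIntegrable_deriv_of_nonneg (g := G)
    · rwa [uIcc_of_le hac.le]
    · rwa [min_eq_left hac.le, max_eq_right hac.le]
    · rwa [min_eq_left hac.le, max_eq_right hac.le]
  refine ⟨hint, ?_⟩
  have hcb : Tendsto g (nhdsWithin c (Iio c)) (nhds (g c)) :=
    ((hg c ⟨hac, le_refl c⟩).continuousAt.continuousWithinAt)
  exact intervalIntegral.integral_eq_sub_of_hasDerivAt_of_tendsto hac
    (fun x hx => hg x ⟨hx.1, hx.2.le⟩) hint hla hcb
section helpers
variable {a b : ℝ} {F₀ f₀ : ℝ → ℝ}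

/-- ∫_a^c f₀ F₀^{θ-1} = F₀(c)^θ/θ, plus integrability. -/
lemma l1 (hab : a < b)
    (hderiv : ∀ y ∈ Ioo a b, HasDerivAt F₀ (f₀ y) y)
    (hf₀pos : ∀ y ∈ Ioo a b, 0 < f₀ y)
    (hF₀pos : ∀ y ∈ Ioo a b, 0 < F₀ y)
    (hFa : Tendsto F₀ (nhdsWithin a (Ioi a)) (nhds 0))
    {θ : ℝ} (hθ : 0 < θ) {c : ℝ} (hc : c ∈ Ioo a b) :
    IntervalIntegrable (fun v => f₀ v * F₀ v ^ (θ - 1)) volume a c ∧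
      (∫ v in a..c, f₀ v * F₀ v ^ (θ - 1)) = F₀ c ^ θ / θ := by
  have h := ftc_improper hc.1 (fun x => F₀ x ^ θ / θ) (fun v => f₀ v * F₀ v ^ (θ - 1)) 0
    (fun x hx => ?_) (fun x hx => ?_) ?_
  · exact ⟨h.1, by simpa using h.2⟩
  · have hx' : x ∈ Ioo a b := ⟨hx.1, lt_of_le_of_lt hx.2 hc.2⟩
    have hd := (HasDerivAt.rpow_const (p := θ) (hderiv x hx') (Or.inl (hF₀pos x hx').ne')).div_const θ
    have : f₀ x * F₀ x ^ (θ - 1) = f₀ x * θ * F₀ x ^ (θ - 1) / θ := by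
      field_simp
    simpa [← this] using hd
  · have hx' : x ∈ Ioo a b := ⟨hx.1, lt_of_lt_of_le hx.2 hc.2.le⟩
    exact mul_nonneg (hf₀pos x hx').le (Real.rpow_nonneg (hF₀pos x hx').le _)
  · have := (hFa.rpow_const (Or.inr hθ.le)).div_const θ
    simpa [Real.zero_rpow hθ.ne'] using this

/-- ∫_u^c f₀/F₀ = log F₀(c) - log F₀(u), plus integrability. -/
lemma llog (hab : a < b)
    (hderiv : ∀ y ∈ Ioo a b, HasDerivAt F₀ (f₀ y) y)
    (hf₀cont : ContinuousOn f₀ (Ioo a b))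
    (hF₀pos : ∀ y ∈ Ioo a b, 0 < F₀ y)
    {u c : ℝ} (hu : a < u) (huc : u ≤ c) (hcb : c < b) :
    IntervalIntegrable (fun x => f₀ x / F₀ x) volume u c ∧
      (∫ x in u..c, f₀ x / F₀ x) = Real.log (F₀ c) - Real.log (F₀ u) := by
  have hsub : uIcc u c ⊆ Ioo a b := by
    rw [uIcc_of_le huc]
    exact fun x hx => ⟨hu.trans_le hx.1, lt_of_le_of_lt hx.2 hcb⟩
  have hF₀cont : ContinuousOn F₀ (uIcc u c) :=
    fun x hx => ((hderiv x (hsub hx)).continuousAt).continuousWithinAt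
  have hint : IntervalIntegrable (fun x => f₀ x / F₀ x) volume u c :=
    ((hf₀cont.mono hsub).div hF₀cont
      (fun x hx => (hF₀pos x (hsub hx)).ne')).intervalIntegrable
  refine ⟨hint, ?_⟩
  exact intervalIntegral.integral_eq_sub_of_hasDerivAt
    (fun x hx => (hderiv x (hsub hx)).log (hF₀pos x (hsub hx)).ne') hint

end helpers
section helpers2
variable {a b : ℝ} {F₀ f₀ : ℝ → ℝ}

lemma louter (hab : a < b)
    (hderiv : ∀ y ∈ Ioo a b, HasDerivAt F₀ (f₀ y) y)
    (hmono : StrictMonoOn F₀ (Ioo a b))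
    (hf₀pos : ∀ y ∈ Ioo a b, 0 < f₀ y)
    (hF₀pos : ∀ y ∈ Ioo a b, 0 < F₀ y)
    (hFa : Tendsto F₀ (nhdsWithin a (Ioi a)) (nhds 0))
    {θ₁ θ₂ : ℝ} (hθ₁ : 0 < θ₁) (hθ₂ : 0 < θ₂)
    {c y₂ : ℝ} (hc : a < c) (hcy : c ≤ y₂) (hy₂ : y₂ < b) :
    IntervalIntegrable (fun u => f₀ u * F₀ u ^ (θ₁ + θ₂ - 1) *
        (θ₁ + (θ₁ + θ₂) * θ₂ * (Real.log (F₀ y₂) - Real.log (F₀ u)))) volume a c ∧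
      (∫ u in a..c, f₀ u * F₀ u ^ (θ₁ + θ₂ - 1) *
        (θ₁ + (θ₁ + θ₂) * θ₂ * (Real.log (F₀ y₂) - Real.log (F₀ u)))) =
        F₀ c ^ (θ₁ + θ₂) * (1 + θ₂ * (Real.log (F₀ y₂) - Real.log (F₀ c))) := by
  set θ : ℝ := θ₁ + θ₂ with hθdef
  have hθ : 0 < θ := by positivity
  set C : ℝ := 1 + θ₂ * Real.log (F₀ y₂) with hCdef
  have h := ftc_improper hc (fun u => F₀ u ^ θ * (C - θ₂ * Real.log (F₀ u)))
    (fun u => f₀ u * F₀ u ^ (θ - 1) * (θ₁ + θ * θ₂ * (Real.log (F₀ y₂) - Real.log (F₀ u)))) 0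
    (fun x hx => ?_) (fun x hx => ?_) ?_
  · refine ⟨h.1, ?_⟩
    rw [h.2]
    have hcb : c ∈ Ioo a b := ⟨hc, lt_of_le_of_lt hcy hy₂⟩
    rw [hCdef]; ring
  · have hx' : x ∈ Ioo a b := ⟨hx.1, lt_of_le_of_lt hx.2 (lt_of_le_of_lt hcy hy₂)⟩
    have ht : (0:ℝ) < F₀ x := hF₀pos x hx'
    have hP := HasDerivAt.rpow_const (p := θ) (hderiv x hx') (Or.inl ht.ne')
    have hLg := (hderiv x hx').log ht.ne'
    have hin : HasDerivAt (fun u => C - θ₂ * Real.log (F₀ u)) (-(θ₂ * (f₀ x / F₀ x))) x :=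
      (hLg.const_mul θ₂).const_sub C
    have hg := hP.mul hin
    have hkey : F₀ x ^ θ = F₀ x ^ (θ - 1) * F₀ x := by
      rw [← Real.rpow_add_one ht.ne' (θ - 1)]; ring_nf
    have heqd : f₀ x * F₀ x ^ (θ - 1) * (θ₁ + θ * θ₂ * (Real.log (F₀ y₂) - Real.log (F₀ x)))
        = f₀ x * θ * F₀ x ^ (θ - 1) * (C - θ₂ * Real.log (F₀ x))
          + F₀ x ^ θ * -(θ₂ * (f₀ x / F₀ x)) := by
      rw [hkey, hCdef, hθdef]; field_simp; ring
    rw [← heqd] at hg; exact hg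
  · have hx' : x ∈ Ioo a b := ⟨hx.1, lt_of_lt_of_le hx.2 (hcy.trans hy₂.le)⟩
    have hy₂' : y₂ ∈ Ioo a b := ⟨hx.1.trans (lt_of_lt_of_le hx.2 hcy), hy₂⟩
    have hlog : Real.log (F₀ x) ≤ Real.log (F₀ y₂) := by
      rw [Real.log_le_log_iff (hF₀pos x hx') (hF₀pos y₂ hy₂')]
      exact (hmono hx' hy₂' (lt_of_lt_of_le hx.2 hcy)).le
    have h1 : 0 ≤ θ₁ + θ * θ₂ * (Real.log (F₀ y₂) - Real.log (F₀ x)) := by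
      have := sub_nonneg.mpr hlog
      positivity
    exact mul_nonneg (mul_nonneg (hf₀pos x hx').le (Real.rpow_nonneg (hF₀pos x hx').le _)) h1
  · have hFθ : Tendsto (fun u => F₀ u ^ θ) (nhdsWithin a (Ioi a)) (nhds 0) := by
      simpa [Real.zero_rpow hθ.ne'] using hFa.rpow_const (Or.inr hθ.le)
    have hF0' : Tendsto F₀ (nhdsWithin a (Ioi a)) (nhdsWithin 0 (Ioi 0)) := by
      refine tendsto_nhdsWithin_of_tendsto_nhds_of_eventually_within _ hFa ?_
      filter_upwards [Ioo_mem_nhdsGT_of_mem (left_mem_Ico.mpr hab)] with x hx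
      exact hF₀pos x hx
    have hFlog : Tendsto (fun u => Real.log (F₀ u) * F₀ u ^ θ) (nhdsWithin a (Ioi a)) (nhds 0) :=
      (tendsto_log_mul_rpow_nhdsGT_zero hθ).comp hF0'
    have := (hFθ.const_mul C).sub (hFlog.const_mul θ₂)
    simp only [mul_zero, sub_zero] at this
    refine this.congr fun u => by ring

end helpers2
lemma IntervalIntegrable.congr_ae'' {f g : ℝ → ℝ} {a b : ℝ}
    (h : IntervalIntegrable f volume a b)
    (he : ∀ᵐ x ∂(volume : Measure ℝ), x ∈ Ι a b → f x = g x) :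
    IntervalIntegrable g volume a b := by
  rw [intervalIntegrable_iff] at h ⊢
  exact h.congr ((ae_restrict_iff' measurableSet_uIoc).mpr he)

section helpers3
variable {a b : ℝ} {F₀ f₀ : ℝ → ℝ}

/-- Inner integral when `a < u < y₂ < b`. -/
lemma linner1 (hab : a < b)
    (hderiv : ∀ y ∈ Ioo a b, HasDerivAt F₀ (f₀ y) y)
    (hf₀cont : ContinuousOn f₀ (Ioo a b))
    (hf₀pos : ∀ y ∈ Ioo a b, 0 < f₀ y)
    (hF₀pos : ∀ y ∈ Ioo a b, 0 < F₀ y)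
    (hFa : Tendsto F₀ (nhdsWithin a (Ioi a)) (nhds 0))
    {θ₁ θ₂ : ℝ} (hθ₁ : 0 < θ₁) (hθ₂ : 0 < θ₂)
    {u y₂ : ℝ} (hu : a < u) (huy : u < y₂) (hy₂ : y₂ < b) :
    (∫ v in a..y₂, dprh a b F₀ f₀ θ₁ θ₂ (θ₁ + θ₂) (θ₁ + θ₂) u v) =
      f₀ u * F₀ u ^ (θ₁ + θ₂ - 1) *
        (θ₁ + (θ₁ + θ₂) * θ₂ * (Real.log (F₀ y₂) - Real.log (F₀ u))) := by
  have hθ : (0:ℝ) < θ₁ + θ₂ := by positivity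
  have hu' : u ∈ Ioo a b := ⟨hu, huy.trans hy₂⟩
  have htu : (0:ℝ) < F₀ u := hF₀pos u hu'
  have l1u := l1 hab hderiv hf₀pos hF₀pos hFa hθ hu'
  -- piece 1 : a .. u
  have e1 : ∀ᵐ v ∂(volume : Measure ℝ), v ∈ Ι a u →
      dprh a b F₀ f₀ θ₁ θ₂ (θ₁ + θ₂) (θ₁ + θ₂) u v =
        (θ₁ * (θ₁ + θ₂) * f₀ u * (F₀ u)⁻¹) * (f₀ v * F₀ v ^ (θ₁ + θ₂ - 1)) := by
    have hns : (volume : Measure ℝ) {u} = 0 := measure_singleton u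
    filter_upwards [measure_eq_zero_iff_ae_notMem.mp hns] with v hv hvmem
    rw [uIoc_of_le hu.le] at hvmem
    have hvu : v < u := lt_of_le_of_ne hvmem.2 (by simpa using hv)
    rw [dprh, if_neg (by push_neg; intro _ h; exact absurd h (not_lt.mpr hvu.le)),
      if_pos ⟨hvmem.1, hvu, hu'.2⟩]
    have hexp : F₀ u ^ (θ₁ + θ₂ - (θ₁ + θ₂) - 1) = (F₀ u)⁻¹ := by
      rw [show θ₁ + θ₂ - (θ₁ + θ₂) - 1 = (-1 : ℝ) by ring, Real.rpow_neg_one]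
    rw [hexp]; ring
  have int1 : IntervalIntegrable (fun v => dprh a b F₀ f₀ θ₁ θ₂ (θ₁ + θ₂) (θ₁ + θ₂) u v)
      volume a u := by
    refine IntervalIntegrable.congr_ae'' (l1u.1.const_mul (θ₁ * (θ₁ + θ₂) * f₀ u * (F₀ u)⁻¹)) ?_
    exact e1.mono fun v hv hmem => (hv hmem).symm
  have val1 : (∫ v in a..u, dprh a b F₀ f₀ θ₁ θ₂ (θ₁ + θ₂) (θ₁ + θ₂) u v)
      = (θ₁ * (θ₁ + θ₂) * f₀ u * (F₀ u)⁻¹) * (F₀ u ^ (θ₁ + θ₂) / (θ₁ + θ₂)) := by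
    rw [intervalIntegral.integral_congr_ae e1, intervalIntegral.integral_const_mul, l1u.2]
  -- piece 2 : u .. y₂
  have llog2 := llog hab hderiv hf₀cont hF₀pos hu huy.le hy₂
  have e2 : ∀ᵐ v ∂(volume : Measure ℝ), v ∈ Ι u y₂ →
      dprh a b F₀ f₀ θ₁ θ₂ (θ₁ + θ₂) (θ₁ + θ₂) u v =
        ((θ₁ + θ₂) * θ₂ * f₀ u * F₀ u ^ (θ₁ + θ₂ - 1)) * (f₀ v / F₀ v) := by
    refine Filter.Eventually.of_forall fun v hvmem => ?_
    rw [uIoc_of_le huy.le] at hvmem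
    rw [dprh, if_pos ⟨hu, hvmem.1, lt_of_le_of_lt hvmem.2 hy₂⟩]
    have hexp : F₀ v ^ (θ₁ + θ₂ - (θ₁ + θ₂) - 1) = (F₀ v)⁻¹ := by
      rw [show θ₁ + θ₂ - (θ₁ + θ₂) - 1 = (-1 : ℝ) by ring, Real.rpow_neg_one]
    rw [hexp, div_eq_mul_inv]; ring
  have int2 : IntervalIntegrable (fun v => dprh a b F₀ f₀ θ₁ θ₂ (θ₁ + θ₂) (θ₁ + θ₂) u v)
      volume u y₂ := by
    refine IntervalIntegrable.congr_ae''
      (llog2.1.const_mul ((θ₁ + θ₂) * θ₂ * f₀ u * F₀ u ^ (θ₁ + θ₂ - 1))) ?_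
    exact e2.mono fun v hv hmem => (hv hmem).symm
  have val2 : (∫ v in u..y₂, dprh a b F₀ f₀ θ₁ θ₂ (θ₁ + θ₂) (θ₁ + θ₂) u v)
      = ((θ₁ + θ₂) * θ₂ * f₀ u * F₀ u ^ (θ₁ + θ₂ - 1)) *
          (Real.log (F₀ y₂) - Real.log (F₀ u)) := by
    rw [intervalIntegral.integral_congr_ae e2, intervalIntegral.integral_const_mul, llog2.2]
  rw [← intervalIntegral.integral_add_adjacent_intervals int1 int2, val1, val2]
  have hkey : F₀ u ^ (θ₁ + θ₂) = F₀ u ^ (θ₁ + θ₂ - 1) * F₀ u := by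
    rw [← Real.rpow_add_one htu.ne' (θ₁ + θ₂ - 1)]; ring_nf
  rw [hkey]
  field_simp

/-- Inner integral when `a < y₂ < u < b`. -/
lemma linner2 (hab : a < b)
    (hderiv : ∀ y ∈ Ioo a b, HasDerivAt F₀ (f₀ y) y)
    (hf₀pos : ∀ y ∈ Ioo a b, 0 < f₀ y)
    (hF₀pos : ∀ y ∈ Ioo a b, 0 < F₀ y)
    (hFa : Tendsto F₀ (nhdsWithin a (Ioi a)) (nhds 0))
    {θ₁ θ₂ : ℝ} (hθ₁ : 0 < θ₁) (hθ₂ : 0 < θ₂)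
    {u y₂ : ℝ} (hy₂ : a < y₂) (huy : y₂ < u) (hub : u < b) :
    (∫ v in a..y₂, dprh a b F₀ f₀ θ₁ θ₂ (θ₁ + θ₂) (θ₁ + θ₂) u v) =
      θ₁ * F₀ y₂ ^ (θ₁ + θ₂) * (f₀ u / F₀ u) := by
  have hθ : (0:ℝ) < θ₁ + θ₂ := by positivity
  have hu' : u ∈ Ioo a b := ⟨hy₂.trans huy, hub⟩
  have htu : (0:ℝ) < F₀ u := hF₀pos u hu'
  have l1y := l1 hab hderiv hf₀pos hF₀pos hFa hθ (c := y₂) ⟨hy₂, huy.trans hub⟩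
  have e1 : ∀ᵐ v ∂(volume : Measure ℝ), v ∈ Ι a y₂ →
      dprh a b F₀ f₀ θ₁ θ₂ (θ₁ + θ₂) (θ₁ + θ₂) u v =
        (θ₁ * (θ₁ + θ₂) * f₀ u * (F₀ u)⁻¹) * (f₀ v * F₀ v ^ (θ₁ + θ₂ - 1)) := by
    refine Filter.Eventually.of_forall fun v hvmem => ?_
    rw [uIoc_of_le hy₂.le] at hvmem
    have hvu : v < u := lt_of_le_of_lt hvmem.2 huy
    rw [dprh, if_neg (by push_neg; intro _ h; exact absurd h (not_lt.mpr hvu.le)),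
      if_pos ⟨hvmem.1, hvu, hub⟩]
    have hexp : F₀ u ^ (θ₁ + θ₂ - (θ₁ + θ₂) - 1) = (F₀ u)⁻¹ := by
      rw [show θ₁ + θ₂ - (θ₁ + θ₂) - 1 = (-1 : ℝ) by ring, Real.rpow_neg_one]
    rw [hexp]; ring
  rw [intervalIntegral.integral_congr_ae e1, intervalIntegral.integral_const_mul, l1y.2]
  field_simp

end helpers3

theorem dprh_cdf_case4
    (a b : ℝ) (hab : a < b) (F₀ f₀ : ℝ → ℝ)
    (hderiv : ∀ y ∈ Ioo a b, HasDerivAt F₀ (f₀ y) y)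
    (hf₀cont : ContinuousOn f₀ (Ioo a b))
    (hmono : StrictMonoOn F₀ (Ioo a b))
    (hf₀pos : ∀ y ∈ Ioo a b, 0 < f₀ y)
    (hF₀pos : ∀ y ∈ Ioo a b, 0 < F₀ y)
    (hF₀lt1 : ∀ y ∈ Ioo a b, F₀ y < 1)
    (hFa : Filter.Tendsto F₀ (nhdsWithin a (Ioi a)) (nhds 0))
    (hFb : Filter.Tendsto F₀ (nhdsWithin b (Iio b)) (nhds 1))
    (θ₁ θ₂ θ₁' θ₂' : ℝ) (hθ₁ : 0 < θ₁) (hθ₂ : 0 < θ₂) (hθ₁' : 0 < θ₁') (hθ₂' : 0 < θ₂')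
    (heq₁ : θ₁ + θ₂ = θ₁') (heq₂ : θ₁ + θ₂ = θ₂') (y₁ y₂ : ℝ)
    :
    (a < y₁ → y₁ < y₂ → y₂ < b →
      (∫ u in a..y₁, ∫ v in a..y₂, dprh a b F₀ f₀ θ₁ θ₂ θ₁' θ₂' u v) =
        F₀ y₁ ^ (θ₁ + θ₂) * (1 + θ₂ * Real.log (F₀ y₂ / F₀ y₁))) ∧
    (a < y₂ → y₂ < y₁ → y₁ < b →
      (∫ u in a..y₁, ∫ v in a..y₂, dprh a b F₀ f₀ θ₁ θ₂ θ₁' θ₂' u v) =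
        F₀ y₂ ^ (θ₁ + θ₂) * (1 + θ₁ * Real.log (F₀ y₁ / F₀ y₂))) := by
  subst heq₁
  subst heq₂
  have hF₀posne : ∀ y ∈ Ioo a b, F₀ y ≠ 0 := fun y hy => (hF₀pos y hy).ne'
  constructor
  · intro h1 h2 h3
    have hy₁' : y₁ ∈ Ioo a b := ⟨h1, h2.trans h3⟩
    have hy₂' : y₂ ∈ Ioo a b := ⟨h1.trans h2, h3⟩
    have e : ∀ᵐ u ∂(volume : Measure ℝ), u ∈ Ι a y₁ →
        (∫ v in a..y₂, dprh a b F₀ f₀ θ₁ θ₂ (θ₁ + θ₂) (θ₁ + θ₂) u v) =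
          f₀ u * F₀ u ^ (θ₁ + θ₂ - 1) *
            (θ₁ + (θ₁ + θ₂) * θ₂ * (Real.log (F₀ y₂) - Real.log (F₀ u))) := by
      refine Filter.Eventually.of_forall fun u hu => ?_
      rw [uIoc_of_le h1.le] at hu
      exact linner1 hab hderiv hf₀cont hf₀pos hF₀pos hFa hθ₁ hθ₂ hu.1
        (lt_of_le_of_lt hu.2 h2) h3
    rw [intervalIntegral.integral_congr_ae e,
      (louter hab hderiv hmono hf₀pos hF₀pos hFa hθ₁ hθ₂ h1 h2.le h3).2,
      Real.log_div (hF₀posne y₂ hy₂') (hF₀posne y₁ hy₁')]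
  · intro h1 h2 h3
    have hy₁' : y₁ ∈ Ioo a b := ⟨h1.trans h2, h3⟩
    have hy₂' : y₂ ∈ Ioo a b := ⟨h1, h2.trans h3⟩
    have hout := louter hab hderiv hmono hf₀pos hF₀pos hFa hθ₁ hθ₂ h1 (le_refl y₂) hy₂'.2
    -- first piece : a .. y₂
    have eA : ∀ᵐ u ∂(volume : Measure ℝ), u ∈ Ι a y₂ →
        (∫ v in a..y₂, dprh a b F₀ f₀ θ₁ θ₂ (θ₁ + θ₂) (θ₁ + θ₂) u v) =
          f₀ u * F₀ u ^ (θ₁ + θ₂ - 1) *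
            (θ₁ + (θ₁ + θ₂) * θ₂ * (Real.log (F₀ y₂) - Real.log (F₀ u))) := by
      have hns : (volume : Measure ℝ) {y₂} = 0 := measure_singleton y₂
      filter_upwards [measure_eq_zero_iff_ae_notMem.mp hns] with u hune hu
      rw [uIoc_of_le h1.le] at hu
      have huy : u < y₂ := lt_of_le_of_ne hu.2 (by simpa using hune)
      exact linner1 hab hderiv hf₀cont hf₀pos hF₀pos hFa hθ₁ hθ₂ hu.1 huy hy₂'.2
    have intA : IntervalIntegrable
        (fun u => ∫ v in a..y₂, dprh a b F₀ f₀ θ₁ θ₂ (θ₁ + θ₂) (θ₁ + θ₂) u v) volume a y₂ :=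
      IntervalIntegrable.congr_ae'' hout.1 (eA.mono fun u hu hmem => (hu hmem).symm)
    -- second piece : y₂ .. y₁
    have llogB := llog hab hderiv hf₀cont hF₀pos h1 h2.le h3
    have eB : ∀ᵐ u ∂(volume : Measure ℝ), u ∈ Ι y₂ y₁ →
        (∫ v in a..y₂, dprh a b F₀ f₀ θ₁ θ₂ (θ₁ + θ₂) (θ₁ + θ₂) u v) =
          (θ₁ * F₀ y₂ ^ (θ₁ + θ₂)) * (f₀ u / F₀ u) := by
      refine Filter.Eventually.of_forall fun u hu => ?_
      rw [uIoc_of_le h2.le] at hu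
      rw [linner2 hab hderiv hf₀pos hF₀pos hFa hθ₁ hθ₂ h1 hu.1 (lt_of_le_of_lt hu.2 h3)]
      try ring
    have intB : IntervalIntegrable
        (fun u => ∫ v in a..y₂, dprh a b F₀ f₀ θ₁ θ₂ (θ₁ + θ₂) (θ₁ + θ₂) u v) volume y₂ y₁ :=
      IntervalIntegrable.congr_ae'' (llogB.1.const_mul (θ₁ * F₀ y₂ ^ (θ₁ + θ₂)))
        (eB.mono fun u hu hmem => (hu hmem).symm)
    rw [← intervalIntegral.integral_add_adjacent_intervals intA intB,
      intervalIntegral.integral_congr_ae eA, hout.2,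
      intervalIntegral.integral_congr_ae eB, intervalIntegral.integral_const_mul, llogB.2,
      Real.log_div (hF₀posne y₁ hy₁') (hF₀posne y₂ hy₂')]
    ring
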